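/- arXiv:1612.09493 — 4 statements merged into one kernel-verified Lean document; each statement's English description precedes it below -/
import Mathlib

section
/- In the Lie algebra 𝔤, the subspace 𝔞 = span{z, b, x₁, x₂, x₃, x₄} is a 6-dimensional solvable Lie ideal of 𝔤, and 𝔞 equals the radical of 𝔤 (the largest solvable ideal of 𝔤). -/
noncomputable section

/-- The underlying space of the 9-dimensional Lie algebra `𝔤`; coordinates are taken
with respect to the ordered basis `z, b, x₁, x₂, x₃, x₄, h, e, f`
(so index 0 = z, 1 = b, 2 = x₁, 3 = x₂, 4 = x₃, 5 = x₄, 6 = h, 7 = e, 8 = f). -/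
def G : Type := Fin 9 → ℝ

instance : AddCommGroup G := inferInstanceAs (AddCommGroup (Fin 9 → ℝ))
instance : Module ℝ G := inferInstanceAs (Module ℝ (Fin 9 → ℝ))

@[simp] lemma G.add_apply (u v : G) (k : Fin 9) : (u + v) k = u k + v k := rfl
@[simp] lemma G.smul_apply (c : ℝ) (u : G) (k : Fin 9) : (c • u) k = c * u k := rfl
@[simp] lemma G.zero_apply (k : Fin 9) : (0 : G) k = 0 := rfl

/-- The Lie bracket of `𝔤` determined by `[b,xᵢ] = xᵢ`, `[b,z] = 2z`, `[h,x₁] = −3x₁`,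
`[h,x₂] = −x₂`, `[h,x₃] = x₃`, `[h,x₄] = 3x₄`, `[f,x₂] = −3x₁`, `[f,x₃] = −2x₂`,
`[f,x₄] = −x₃`, `[e,x₁] = x₂`, `[e,x₂] = 2x₃`, `[e,x₃] = 3x₄`, `[x₁,x₄] = z`,
`[x₂,x₃] = −3z`, `[h,f] = −2f`, `[h,e] = 2e`, `[f,e] = h`, all other brackets of
basis elements being zero. -/
def gb (u v : G) : G := fun k =>
  match k with
  | 0 => -2*(u 0*v 1 - u 1*v 0) + (u 2*v 5 - u 5*v 2) - 3*(u 3*v 4 - u 4*v 3)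
  | 1 => 0
  | 2 => (u 1*v 2 - u 2*v 1) + 3*(u 2*v 6 - u 6*v 2) + 3*(u 3*v 8 - u 8*v 3)
  | 3 => (u 1*v 3 - u 3*v 1) - (u 2*v 7 - u 7*v 2) + (u 3*v 6 - u 6*v 3) + 2*(u 4*v 8 - u 8*v 4)
  | 4 => (u 1*v 4 - u 4*v 1) - 2*(u 3*v 7 - u 7*v 3) - (u 4*v 6 - u 6*v 4) + (u 5*v 8 - u 8*v 5)
  | 5 => (u 1*v 5 - u 5*v 1) - 3*(u 4*v 7 - u 7*v 4) - 3*(u 5*v 6 - u 6*v 5)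
  | 6 => -(u 7*v 8 - u 8*v 7)
  | 7 => 2*(u 6*v 7 - u 7*v 6)
  | 8 => -2*(u 6*v 8 - u 8*v 6)

instance : LieRing G where
  bracket := gb
  add_lie := by intro x y z; funext k; fin_cases k <;> simp only [gb, G.add_apply] <;> ring
  lie_add := by intro x y z; funext k; fin_cases k <;> simp only [gb, G.add_apply] <;> ring
  lie_self := by intro x; funext k; fin_cases k <;> simp only [gb, G.zero_apply] <;> ring
  leibniz_lie := by intro x y z; funext k; fin_cases k <;> simp only [gb, G.add_apply] <;> ring

lemma G.lie_def (u v : G) : ⁅u, v⁆ = gb u v := rfl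

instance : LieAlgebra ℝ G where
  lie_smul := by
    intro c x y; funext k
    rw [G.lie_def, G.lie_def]
    fin_cases k <;> simp only [gb, G.smul_apply] <;> ring

/-- basis vector `z` -/ def zv : G := Pi.single 0 1
/-- basis vector `b` -/ def bv : G := Pi.single 1 1
/-- basis vector `x₁` -/ def x1v : G := Pi.single 2 1
/-- basis vector `x₂` -/ def x2v : G := Pi.single 3 1
/-- basis vector `x₃` -/ def x3v : G := Pi.single 4 1
/-- basis vector `x₄` -/ def x4v : G := Pi.single 5 1
/-- basis vector `h` -/ def hv : G := Pi.single 6 1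
/-- basis vector `e` -/ def ev : G := Pi.single 7 1
/-- basis vector `f` -/ def fv : G := Pi.single 8 1



namespace Stmt1Aux

/-- The submodule with coordinates 6,7,8 vanishing. -/
def Asub : Submodule ℝ G where
  carrier := {u : G | u 6 = 0 ∧ u 7 = 0 ∧ u 8 = 0}
  add_mem' := by rintro a b ⟨h1, h2, h3⟩ ⟨k1, k2, k3⟩; exact ⟨by simp [h1, k1], by simp [h2, k2], by simp [h3, k3]⟩
  zero_mem' := ⟨rfl, rfl, rfl⟩
  smul_mem' := by rintro c a ⟨h1, h2, h3⟩; exact ⟨by simp [h1], by simp [h2], by simp [h3]⟩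

lemma mem_Asub {u : G} : u ∈ Asub ↔ u 6 = 0 ∧ u 7 = 0 ∧ u 8 = 0 := Iff.rfl

/-- `Asub` as a Lie ideal. -/
def Isub : LieIdeal ℝ G where
  toSubmodule := Asub
  lie_mem := by
    rintro x m ⟨h1, h2, h3⟩
    refine ⟨?_, ?_, ?_⟩ <;>
      (show gb x m _ = 0) <;> simp [gb, h1, h2, h3]

lemma mem_Isub {u : G} : u ∈ Isub ↔ u 6 = 0 ∧ u 7 = 0 ∧ u 8 = 0 := Iff.rfl

lemma Asub_eq_span :
    Asub = Submodule.span ℝ {zv, bv, x1v, x2v, x3v, x4v} := by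
  apply le_antisymm
  · rintro u ⟨h6, h7, h8⟩
    have hu : u = u 0 • zv + u 1 • bv + u 2 • x1v + u 3 • x2v + u 4 • x3v + u 5 • x4v := by
      funext k
      fin_cases k <;> simp only [G.add_apply, G.smul_apply] <;>
        simp [zv, bv, x1v, x2v, x3v, x4v, Pi.single_apply, h6, h7, h8]
    rw [hu]
    have mem : ∀ v ∈ ({zv, bv, x1v, x2v, x3v, x4v} : Set G),
        v ∈ Submodule.span ℝ ({zv, bv, x1v, x2v, x3v, x4v} : Set G) := fun v hv =>
      Submodule.subset_span hv
    refine Submodule.add_mem _ (Submodule.add_mem _ (Submodule.add_mem _ (Submodule.add_mem _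
      (Submodule.add_mem _ ?_ ?_) ?_) ?_) ?_) ?_ <;>
      exact Submodule.smul_mem _ _ (Submodule.subset_span (by simp))
  · rw [Submodule.span_le]
    rintro v hv
    simp only [Set.mem_insert_iff, Set.mem_singleton_iff] at hv
    rcases hv with h | h | h | h | h | h <;> subst h <;>
      exact ⟨by simp [zv, bv, x1v, x2v, x3v, x4v, Pi.single_apply],
             by simp [zv, bv, x1v, x2v, x3v, x4v, Pi.single_apply],
             by simp [zv, bv, x1v, x2v, x3v, x4v, Pi.single_apply]⟩

/-- Linear equivalence between `Asub` and `ℝ⁶`. -/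
def AsubEquiv : Asub ≃ₗ[ℝ] (Fin 6 → ℝ) where
  toFun u := fun i => (u : G) (Fin.castLE (by norm_num) i)
  map_add' u v := rfl
  map_smul' c u := rfl
  invFun v := ⟨fun k => if h : (k : ℕ) < 6 then v ⟨k, h⟩ else 0, by
    refine ⟨?_, ?_, ?_⟩ <;> exact dif_neg (by decide)⟩
  left_inv u := by
    apply Subtype.ext
    funext k
    obtain ⟨h6, h7, h8⟩ := u.2
    show (if h : (k : ℕ) < 6 then (u : G) (Fin.castLE (by norm_num) ⟨(k : ℕ), h⟩) else 0) = (u : G) k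
    fin_cases k
    · rw [dif_pos (by decide)]; rfl
    · rw [dif_pos (by decide)]; rfl
    · rw [dif_pos (by decide)]; rfl
    · rw [dif_pos (by decide)]; rfl
    · rw [dif_pos (by decide)]; rfl
    · rw [dif_pos (by decide)]; rfl
    · rw [dif_neg (by decide)]; exact h6.symm
    · rw [dif_neg (by decide)]; exact h7.symm
    · rw [dif_neg (by decide)]; exact h8.symm
  right_inv v := by
    ext i
    show (if h : ((Fin.castLE (by norm_num : 6 ≤ 9) i : Fin 9) : ℕ) < 6 then v ⟨_, h⟩ else 0) = v i
    fin_cases i <;> rw [dif_pos (by decide)] <;> rfl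

lemma finrank_Isub : Module.finrank ℝ Isub = 6 := by
  have : Module.finrank ℝ Asub = 6 := by
    rw [AsubEquiv.finrank_eq]
    simp [Module.finrank_fin_fun]
  exact this

/-- The ideal of elements with coordinates 1, 6, 7, 8 vanishing. -/
def J1 : LieIdeal ℝ G where
  carrier := {u : G | u 1 = 0 ∧ u 6 = 0 ∧ u 7 = 0 ∧ u 8 = 0}
  add_mem' := by rintro a b ⟨h1, h2, h3, h4⟩ ⟨k1, k2, k3, k4⟩
                 exact ⟨by simp [h1, k1], by simp [h2, k2], by simp [h3, k3], by simp [h4, k4]⟩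
  zero_mem' := ⟨rfl, rfl, rfl, rfl⟩
  smul_mem' := by rintro c a ⟨h1, h2, h3, h4⟩
                  exact ⟨by simp [h1], by simp [h2], by simp [h3], by simp [h4]⟩
  lie_mem := by
    rintro x m ⟨h1, h2, h3, h4⟩
    refine ⟨?_, ?_, ?_, ?_⟩ <;> (show gb x m _ = 0) <;> simp [gb, h1, h2, h3, h4]

lemma mem_J1 {u : G} : u ∈ J1 ↔ u 1 = 0 ∧ u 6 = 0 ∧ u 7 = 0 ∧ u 8 = 0 := Iff.rfl

/-- The ideal of multiples of `z` : all coordinates except 0 vanish. -/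
def J2 : LieIdeal ℝ G where
  carrier := {u : G | ∀ k, k ≠ 0 → u k = 0}
  add_mem' := by intro a b ha hb k hk; simp [ha k hk, hb k hk]
  zero_mem' := by intro k _; rfl
  smul_mem' := by intro c a ha k hk; simp [ha k hk]
  lie_mem := by
    intro x m hm
    intro k hk
    show gb x m k = 0
    have h1 := hm 1 (by decide); have h2 := hm 2 (by decide); have h3 := hm 3 (by decide)
    have h4 := hm 4 (by decide); have h5 := hm 5 (by decide); have h6 := hm 6 (by decide)
    have h7 := hm 7 (by decide); have h8 := hm 8 (by decide)
    fin_cases k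
    · exact absurd rfl hk
    all_goals simp [gb, h1, h2, h3, h4, h5, h6, h7, h8]

lemma mem_J2 {u : G} : u ∈ J2 ↔ ∀ k, k ≠ 0 → u k = 0 := Iff.rfl

open LieAlgebra

lemma derived_one_le : derivedSeriesOfIdeal ℝ G 1 Isub ≤ J1 := by
  rw [derivedSeriesOfIdeal_succ, derivedSeriesOfIdeal_zero, LieSubmodule.lie_le_iff]
  rintro x ⟨h6, h7, h8⟩ m ⟨k6, k7, k8⟩
  refine ⟨?_, ?_, ?_, ?_⟩ <;> (show gb x m _ = 0) <;> simp [gb, h6, h7, h8, k6, k7, k8]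

lemma derived_two_le : derivedSeriesOfIdeal ℝ G 2 Isub ≤ J2 := by
  have : derivedSeriesOfIdeal ℝ G 2 Isub ≤ ⁅J1, J1⁆ := by
    rw [show (2 : ℕ) = 1 + 1 from rfl, derivedSeriesOfIdeal_succ]
    exact LieSubmodule.mono_lie derived_one_le derived_one_le
  refine le_trans this ?_
  rw [LieSubmodule.lie_le_iff]
  rintro x ⟨h1, h6, h7, h8⟩ m ⟨k1, k6, k7, k8⟩
  intro k hk
  show gb x m k = 0
  fin_cases k
  · exact absurd rfl hk
  all_goals simp [gb, h1, h6, h7, h8, k1, k6, k7, k8]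

lemma derived_three : derivedSeriesOfIdeal ℝ G 3 Isub = ⊥ := by
  rw [eq_bot_iff]
  have : derivedSeriesOfIdeal ℝ G 3 Isub ≤ ⁅J2, J2⁆ := by
    rw [show (3 : ℕ) = 2 + 1 from rfl, derivedSeriesOfIdeal_succ]
    exact LieSubmodule.mono_lie derived_two_le derived_two_le
  refine le_trans this ?_
  rw [LieSubmodule.lie_le_iff]
  intro x hx m hm
  have hx1 := hx 1 (by decide)
  have hm1 := hm 1 (by decide)
  have : ⁅x, m⁆ = 0 := by
    funext k
    show gb x m k = 0
    have h : ∀ j : Fin 9, j ≠ 0 → x j = 0 := hx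
    have k' : ∀ j : Fin 9, j ≠ 0 → m j = 0 := hm
    fin_cases k <;>
      simp [gb, h 1 (by decide), h 2 (by decide), h 3 (by decide), h 4 (by decide),
        h 5 (by decide), h 6 (by decide), h 7 (by decide), h 8 (by decide),
        k' 1 (by decide), k' 2 (by decide), k' 3 (by decide), k' 4 (by decide),
        k' 5 (by decide), k' 6 (by decide), k' 7 (by decide), k' 8 (by decide)]
  rw [this]; exact (⊥ : LieIdeal ℝ G).zero_mem

lemma Isub_solvable : LieAlgebra.IsSolvable Isub := by
  rw [LieAlgebra.isSolvable_iff ℝ]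
  exact ⟨3, (LieIdeal.derivedSeries_eq_bot_iff Isub 3).mpr derived_three⟩

/-- From any element of an ideal with nonzero `sl₂`-part, produce an "`e`-like" element. -/
lemma exists_elike (K : LieIdeal ℝ G) (u : G) (hu : u ∈ K)
    (h : ¬(u 6 = 0 ∧ u 7 = 0 ∧ u 8 = 0)) :
    ∃ w ∈ K, w 6 = 0 ∧ w 7 ≠ 0 ∧ w 8 = 0 := by
  by_cases h8 : u 8 = 0
  · by_cases h6 : u 6 = 0
    · have h7 : u 7 ≠ 0 := by tauto
      exact ⟨u, hu, h6, h7, h8⟩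
    · refine ⟨⁅ev, u⁆, K.lie_mem hu, ?_, ?_, ?_⟩
      · show gb ev u 6 = 0; simp [gb, ev, Pi.single_apply, h8]
      · show gb ev u 7 ≠ 0
        have : gb ev u 7 = -2 * u 6 := by simp [gb, ev, Pi.single_apply]
        rw [this]; intro hc; apply h6; linarith
      · show gb ev u 8 = 0; simp [gb, ev, Pi.single_apply]
  · refine ⟨⁅ev, ⁅ev, u⁆⁆, K.lie_mem (K.lie_mem hu), ?_, ?_, ?_⟩
    · show gb ev (gb ev u) 6 = 0; simp [gb, ev, Pi.single_apply]
    · show gb ev (gb ev u) 7 ≠ 0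
      have : gb ev (gb ev u) 7 = 2 * u 8 := by
        simp [gb, ev, Pi.single_apply]
      rw [this]; intro hc; apply h8; linarith
    · show gb ev (gb ev u) 8 = 0; simp [gb, ev, Pi.single_apply]

/-- An `e`-like element of an ideal gives an `e`-like element of its derived ideal. -/
lemma elike_step (K : LieIdeal ℝ G) (w : G) (hw : w ∈ K)
    (h6 : w 6 = 0) (h7 : w 7 ≠ 0) (h8 : w 8 = 0) :
    ∃ w' ∈ ⁅K, K⁆, w' 6 = 0 ∧ w' 7 ≠ 0 ∧ w' 8 = 0 := by
  set u : G := ⁅fv, w⁆ with hu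
  have hu6 : u 6 = w 7 := by show gb fv w 6 = w 7; simp [gb, fv, Pi.single_apply]
  have hu7 : u 7 = 0 := by show gb fv w 7 = 0; simp [gb, fv, Pi.single_apply, h6]
  have hu8 : u 8 = 0 := by
    show gb fv w 8 = 0
    have : gb fv w 8 = 2 * w 6 := by simp [gb, fv, Pi.single_apply]
    rw [this, h6]; ring
  have huK : u ∈ K := K.lie_mem hw
  refine ⟨⁅u, w⁆, LieSubmodule.lie_mem_lie huK hw, ?_, ?_, ?_⟩
  · show gb u w 6 = 0; simp [gb, hu7, hu8, h7, h8]
  · show gb u w 7 ≠ 0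
    have : gb u w 7 = 2 * (w 7 * w 7) := by simp [gb, hu6, hu7]
    rw [this]
    intro hc
    apply h7
    have := mul_self_eq_zero.mp (by linarith : w 7 * w 7 = 0)
    exact this
  · show gb u w 8 = 0
    have : gb u w 8 = -2 * (u 6 * w 8 - u 8 * w 6) := by simp [gb]
    rw [this, h8, hu8, h6]; ring

lemma solvable_le (J : LieIdeal ℝ G) (hJ : LieAlgebra.IsSolvable J) : J ≤ Isub := by
  obtain ⟨k, hk⟩ := (LieAlgebra.isSolvable_iff ℝ _).mp hJ
  rw [LieIdeal.derivedSeries_eq_bot_iff] at hk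
  intro u huJ
  by_contra hnot
  have key : ∀ n : ℕ, ∃ w ∈ derivedSeriesOfIdeal ℝ G n J,
      w 6 = 0 ∧ w 7 ≠ 0 ∧ w 8 = 0 := by
    intro n
    induction n with
    | zero =>
      rw [derivedSeriesOfIdeal_zero]
      exact exists_elike J u huJ (fun hc => hnot hc)
    | succ m ih =>
      obtain ⟨w, hwm, h6, h7, h8⟩ := ih
      rw [derivedSeriesOfIdeal_succ]
      exact elike_step _ w hwm h6 h7 h8
  obtain ⟨w, hwk, _, h7, _⟩ := key k
  rw [hk] at hwk
  have : w = 0 := hwk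
  exact h7 (by rw [this]; rfl)

lemma Isub_eq_radical : Isub = LieAlgebra.radical ℝ G := by
  apply le_antisymm
  · exact le_sSup Isub_solvable
  · exact sSup_le fun J hJ => solvable_le J hJ

end Stmt1Aux

/-- The subspace `𝔞 = span{z, b, x₁, x₂, x₃, x₄}` is a 6-dimensional
solvable Lie ideal of `𝔤`, and it equals the radical of `𝔤` (the largest solvable ideal). -/
theorem stmt1 :
    ∃ I : LieIdeal ℝ G,
      (I : Submodule ℝ G) = Submodule.span ℝ {zv, bv, x1v, x2v, x3v, x4v} ∧
      Module.finrank ℝ I = 6 ∧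
      LieAlgebra.IsSolvable I ∧
      I = LieAlgebra.radical ℝ G := by
  refine ⟨Stmt1Aux.Isub, ?_, Stmt1Aux.finrank_Isub, Stmt1Aux.Isub_solvable, Stmt1Aux.Isub_eq_radical⟩
  exact Stmt1Aux.Asub_eq_span
end
end

section
/- In the Lie algebra 𝔤, the subspace 𝔥 = span{x₁, h − b, f − z} is a 3-dimensional solvable Lie subalgebra (with brackets [h−b, x₁] = −4x₁, [h−b, f−z] = −2(f−z), [x₁, f−z] = 0), and the intersection 𝔥 ∩ span{x₁, x₂, x₃, x₄} is the one-dimensional line ℝx₁. -/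
noncomputable section

@[simp] lemma G.sub_apply (u v : G) (k : Fin 9) : (u - v) k = u k - v k := rfl
@[simp] lemma G.neg_apply (u : G) (k : Fin 9) : (-u) k = -(u k) := rfl

lemma br1 : ⁅hv - bv, x1v⁆ = (-4 : ℝ) • x1v := by
  rw [G.lie_def]; funext k
  fin_cases k <;> simp [gb] <;> simp [x1v, hv, bv, Pi.single_apply] <;> ring

lemma br2 : ⁅hv - bv, fv - zv⁆ = (-2 : ℝ) • (fv - zv) := by
  rw [G.lie_def]; funext k
  fin_cases k <;> simp [gb] <;> simp [hv, bv, fv, zv, Pi.single_apply] <;> ring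

lemma br3 : ⁅x1v, fv - zv⁆ = (0 : G) := by
  rw [G.lie_def]; funext k
  fin_cases k <;> simp [gb] <;> simp [x1v, fv, zv, Pi.single_apply]

lemma mem_H {u : G} (hu : u ∈ Submodule.span ℝ ({x1v, hv - bv, fv - zv} : Set G)) :
    ∃ a b c : ℝ, u = a • x1v + b • (hv - bv) + c • (fv - zv) := by
  induction hu using Submodule.span_induction with
  | mem x hx =>
    simp only [Set.mem_insert_iff, Set.mem_singleton_iff] at hx
    rcases hx with rfl | rfl | rfl
    · exact ⟨1, 0, 0, by module⟩
    · exact ⟨0, 1, 0, by module⟩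
    · exact ⟨0, 0, 1, by module⟩
  | zero => exact ⟨0, 0, 0, by simp⟩
  | add x y _ _ hx hy =>
    obtain ⟨a1, b1, c1, rfl⟩ := hx
    obtain ⟨a2, b2, c2, rfl⟩ := hy
    exact ⟨a1 + a2, b1 + b2, c1 + c2, by module⟩
  | smul t x _ hx =>
    obtain ⟨a, b, c, rfl⟩ := hx
    exact ⟨t * a, t * b, t * c, by module⟩

lemma bracket_formula (a1 b1 c1 a2 b2 c2 : ℝ) :
    ⁅a1 • x1v + b1 • (hv - bv) + c1 • (fv - zv),
      a2 • x1v + b2 • (hv - bv) + c2 • (fv - zv)⁆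
      = (4 * (a1 * b2 - b1 * a2)) • x1v
        + (0 : ℝ) • (hv - bv)
        + (-2 * (b1 * c2 - c1 * b2)) • (fv - zv) := by
  rw [G.lie_def]
  funext k
  fin_cases k <;>
    simp [gb] <;> simp [x1v, hv, bv, fv, zv, Pi.single_apply] <;> ring

/-- The subspace `𝔥 = span{x₁, h − b, f − z}` is a 3-dimensional solvable
Lie subalgebra of `𝔤` (with brackets `[h−b, x₁] = −4x₁`, `[h−b, f−z] = −2(f−z)`,
`[x₁, f−z] = 0`), and the intersection `𝔥 ∩ span{x₁, x₂, x₃, x₄}` is the one-dimensional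
line `ℝx₁`. -/
theorem stmt5 :
    let H : Submodule ℝ G := Submodule.span ℝ {x1v, hv - bv, fv - zv}
    -- `𝔥` is a Lie subalgebra
    (∀ u ∈ H, ∀ v ∈ H, ⁅u, v⁆ ∈ H) ∧
    -- of dimension 3
    Module.finrank ℝ H = 3 ∧
    -- with the stated brackets
    ⁅hv - bv, x1v⁆ = (-4 : ℝ) • x1v ∧
    ⁅hv - bv, fv - zv⁆ = (-2 : ℝ) • (fv - zv) ∧
    ⁅x1v, fv - zv⁆ = 0 ∧
    -- it is solvable (2-step: the derived algebra is abelian)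
    (∀ u₁ ∈ H, ∀ v₁ ∈ H, ∀ u₂ ∈ H, ∀ v₂ ∈ H, ⁅(⁅u₁, v₁⁆ : G), ⁅u₂, v₂⁆⁆ = 0) ∧
    -- and the intersection with `span{x₁, x₂, x₃, x₄}` is the line `ℝx₁`
    H ⊓ Submodule.span ℝ {x1v, x2v, x3v, x4v} = Submodule.span ℝ {x1v} := by
  intro H
  have hmem : ∀ a b c : ℝ, a • x1v + b • (hv - bv) + c • (fv - zv) ∈ H := by
    intro a b c
    apply Submodule.add_mem
    apply Submodule.add_mem
    · exact Submodule.smul_mem _ _ (Submodule.subset_span (by simp))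
    · exact Submodule.smul_mem _ _ (Submodule.subset_span (by simp))
    · exact Submodule.smul_mem _ _ (Submodule.subset_span (by simp))
  refine ⟨?_, ?_, ?_, ?_, ?_, ?_, ?_⟩
  · intro u hu v hv
    obtain ⟨a1, b1, c1, rfl⟩ := mem_H hu
    obtain ⟨a2, b2, c2, rfl⟩ := mem_H hv
    rw [bracket_formula]
    exact hmem _ _ _
  · -- finrank = 3
    have hset : ({x1v, hv - bv, fv - zv} : Set G) = Set.range ![x1v, hv - bv, fv - zv] := by
      ext w
      simp [Matrix.range_cons, Matrix.range_empty]
      tauto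
    have hli : LinearIndependent ℝ ![x1v, hv - bv, fv - zv] := by
      rw [Fintype.linearIndependent_iff]
      intro g hg i
      have h2 := congrFun hg (2 : Fin 9)
      have h6 := congrFun hg (6 : Fin 9)
      have h8 := congrFun hg (8 : Fin 9)
      simp [Fin.sum_univ_three] at h2 h6 h8
      simp [x1v, hv, bv, fv, zv, Pi.single_apply] at h2 h6 h8
      fin_cases i <;> simpa
    show Module.finrank ℝ (Submodule.span ℝ ({x1v, hv - bv, fv - zv} : Set G)) = 3
    rw [hset, finrank_span_eq_card hli]
    simp
  · exact br1
  · exact br2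
  · exact br3
  · intro u1 hu1 v1 hv1 u2 hu2 v2 hv2
    obtain ⟨a1, b1, c1, rfl⟩ := mem_H hu1
    obtain ⟨a2, b2, c2, rfl⟩ := mem_H hv1
    obtain ⟨a3, b3, c3, rfl⟩ := mem_H hu2
    obtain ⟨a4, b4, c4, rfl⟩ := mem_H hv2
    rw [bracket_formula, bracket_formula, bracket_formula]
    module
  · apply le_antisymm
    · rintro u ⟨hu1, hu2⟩
      obtain ⟨a, b, c, rfl⟩ := mem_H hu1
      -- coordinates 6 and 8 vanish on span{x₁,x₂,x₃,x₄}
      have hz : ∀ k : Fin 9, (∀ w ∈ ({x1v, x2v, x3v, x4v} : Set G), w k = 0) →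
          ∀ v ∈ Submodule.span ℝ ({x1v, x2v, x3v, x4v} : Set G), (v : G) k = 0 := by
        intro k hk v hv
        induction hv using Submodule.span_induction with
        | mem x hx => exact hk x hx
        | zero => rfl
        | add x y _ _ hx hy => simp [hx, hy]
        | smul t x _ hx => simp [hx]
      have h6 := hz 6 (by rintro w (rfl | rfl | rfl | rfl) <;>
        simp [x1v, x2v, x3v, x4v, Pi.single_apply]) _ hu2
      have h8 := hz 8 (by rintro w (rfl | rfl | rfl | rfl) <;>
        simp [x1v, x2v, x3v, x4v, Pi.single_apply]) _ hu2
      simp at h6 h8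
      simp [x1v, x2v, x3v, x4v, hv, bv, fv, zv, Pi.single_apply] at h6 h8
      rw [h6, h8]
      refine Submodule.mem_span_singleton.mpr ⟨a, ?_⟩
      module
    · rw [Submodule.span_le]
      rintro w rfl
      exact ⟨Submodule.subset_span (by simp),
        Submodule.subset_span (by simp)⟩
end
end

section
/- The linear map σ : 𝔤 → 𝔤 defined on the basis by σ(xᵢ) = −xᵢ for i = 1, 2, 3, 4 and σ fixing z, b, h, e, f is a Lie algebra automorphism of 𝔤; it preserves the subalgebra 𝔥 = span{x₁, h − b, f − z}, and the induced linear automorphism σ̄ of 𝔪 = 𝔤/𝔥 conjugates J to −J, i.e. σ̄ ∘ J = −J ∘ σ̄. -/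
noncomputable section

/-- The subalgebra `𝔥 = span{x₁, h − b, f − z}` (as a subspace of `𝔤`). -/
def Hsub : Submodule ℝ G := Submodule.span ℝ {x1v, hv - bv, fv - zv}

/-- The quotient map `π : 𝔤 → 𝔪 = 𝔤/𝔥`. -/
def pr : G →ₗ[ℝ] G ⧸ Hsub := Hsub.mkQ

/-- The defining values of the invariant almost complex structure `J` on `𝔪 = 𝔤/𝔥`:
`J z̄ = x̄₂`, `J b̄ = −x̄₃`, `J ē = x̄₄`, `J x̄₂ = −z̄`, `J x̄₃ = b̄`, `J x̄₄ = −ē`. -/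
def IsJ (J : Module.End ℝ (G ⧸ Hsub)) : Prop :=
  J (pr zv) = pr x2v ∧ J (pr bv) = -pr x3v ∧ J (pr ev) = pr x4v ∧
  J (pr x2v) = -pr zv ∧ J (pr x3v) = pr bv ∧ J (pr x4v) = -pr ev

/-- The linear map `σ : 𝔤 → 𝔤` with `σ(xᵢ) = −xᵢ` (i = 1,…,4) and `σ` fixing
`z, b, h, e, f`. -/
def sigma : G →ₗ[ℝ] G where
  toFun u := fun k => (![1, 1, -1, -1, -1, -1, 1, 1, 1] : Fin 9 → ℝ) k * u k
  map_add' u v := by funext k; simp [mul_add]; rfl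
  map_smul' c u := by funext k; simp [G.smul_apply]; show _ = c * (_ * u k); ring


@[simp] lemma sigma_apply (u : G) (k : Fin 9) :
    sigma u k = (![1, 1, -1, -1, -1, -1, 1, 1, 1] : Fin 9 → ℝ) k * u k := rfl

lemma G.decomp (u : G) :
    u = u 0 • zv + u 1 • bv + u 2 • x1v + u 3 • x2v + u 4 • x3v + u 5 • x4v
      + u 6 • hv + u 7 • ev + u 8 • fv := by
  funext k
  fin_cases k <;>
    simp only [G.add_apply, G.smul_apply] <;>
    simp [zv, bv, x1v, x2v, x3v, x4v, hv, ev, fv, Pi.single_apply, G.add_apply, G.smul_apply]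

lemma pr_x1 : pr x1v = 0 := by
  rw [pr, Submodule.mkQ_apply, Submodule.Quotient.mk_eq_zero]
  exact Submodule.subset_span (by simp)

lemma pr_h : pr hv = pr bv := by
  rw [pr, Submodule.mkQ_apply, Submodule.mkQ_apply, Submodule.Quotient.eq]
  exact Submodule.subset_span (by simp)

lemma pr_f : pr fv = pr zv := by
  rw [pr, Submodule.mkQ_apply, Submodule.mkQ_apply, Submodule.Quotient.eq]
  exact Submodule.subset_span (by simp)

@[simp] lemma cvec0 : (![1, 1, -1, -1, -1, -1, 1, 1, 1] : Fin 9 → ℝ) 0 = 1 := rfl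
@[simp] lemma cvec1 : (![1, 1, -1, -1, -1, -1, 1, 1, 1] : Fin 9 → ℝ) 1 = 1 := rfl
@[simp] lemma cvec2 : (![1, 1, -1, -1, -1, -1, 1, 1, 1] : Fin 9 → ℝ) 2 = -1 := rfl
@[simp] lemma cvec3 : (![1, 1, -1, -1, -1, -1, 1, 1, 1] : Fin 9 → ℝ) 3 = -1 := rfl
@[simp] lemma cvec4 : (![1, 1, -1, -1, -1, -1, 1, 1, 1] : Fin 9 → ℝ) 4 = -1 := rfl
@[simp] lemma cvec5 : (![1, 1, -1, -1, -1, -1, 1, 1, 1] : Fin 9 → ℝ) 5 = -1 := rfl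
@[simp] lemma cvec6 : (![1, 1, -1, -1, -1, -1, 1, 1, 1] : Fin 9 → ℝ) 6 = 1 := rfl
@[simp] lemma cvec7 : (![1, 1, -1, -1, -1, -1, 1, 1, 1] : Fin 9 → ℝ) 7 = 1 := rfl
@[simp] lemma cvec8 : (![1, 1, -1, -1, -1, -1, 1, 1, 1] : Fin 9 → ℝ) 8 = 1 := rfl

/-- The map `σ` (negating `x₁,…,x₄` and fixing `z, b, h, e, f`) is a Lie
algebra automorphism of `𝔤`; it preserves `𝔥 = span{x₁, h − b, f − z}`, and the induced
linear automorphism `σ̄` of `𝔪 = 𝔤/𝔥` conjugates `J` to `−J`: `σ̄ ∘ J = −J ∘ σ̄`. -/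
theorem stmt8 :
    -- `σ` takes the prescribed values on the basis
    (sigma zv = zv ∧ sigma bv = bv ∧ sigma hv = hv ∧ sigma ev = ev ∧ sigma fv = fv ∧
      sigma x1v = -x1v ∧ sigma x2v = -x2v ∧ sigma x3v = -x3v ∧ sigma x4v = -x4v) ∧
    -- `σ` is a Lie algebra automorphism of `𝔤`
    Function.Bijective sigma ∧
    (∀ u v : G, sigma ⁅u, v⁆ = ⁅sigma u, sigma v⁆) ∧
    -- `σ` preserves `𝔥`
    Hsub.map sigma = Hsub ∧
    -- and the induced map `σ̄` on `𝔪 = 𝔤/𝔥` conjugates `J` to `−J`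
    (∀ sbar : Module.End ℝ (G ⧸ Hsub), (∀ v : G, sbar (pr v) = pr (sigma v)) →
      ∀ J : Module.End ℝ (G ⧸ Hsub), IsJ J → sbar ∘ₗ J = -(J ∘ₗ sbar)) := by
  have hbasis : sigma zv = zv ∧ sigma bv = bv ∧ sigma hv = hv ∧ sigma ev = ev ∧
      sigma fv = fv ∧ sigma x1v = -x1v ∧ sigma x2v = -x2v ∧ sigma x3v = -x3v ∧
      sigma x4v = -x4v := by
    refine ⟨?_, ?_, ?_, ?_, ?_, ?_, ?_, ?_, ?_⟩ <;>
      (funext k; fin_cases k <;>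
        simp only [sigma_apply, G.neg_apply] <;>
        simp [zv, bv, x1v, x2v, x3v, x4v, hv, ev, fv, Pi.single_apply, Pi.neg_apply, Matrix.cons_val_succ])
  have hinv : ∀ u : G, sigma (sigma u) = u := by
    intro u; funext k; fin_cases k <;> simp [Matrix.cons_val_succ] <;> ring
  have hbrk : ∀ u v : G, sigma ⁅u, v⁆ = ⁅sigma u, sigma v⁆ := by
    intro u v
    funext k
    rw [G.lie_def, G.lie_def]
    fin_cases k <;> simp [gb, Matrix.cons_val_succ] <;> ring
  obtain ⟨hz, hb, hh, he, hf, h1, h2, h3, h4⟩ := hbasis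
  refine ⟨⟨hz, hb, hh, he, hf, h1, h2, h3, h4⟩, Function.Involutive.bijective hinv, hbrk, ?_, ?_⟩
  · -- Hsub.map sigma = Hsub
    have key : ∀ w ∈ ({x1v, hv - bv, fv - zv} : Set G), sigma w ∈ Hsub ∧ ∃ w' ∈ Hsub, sigma w' = w := by
      intro w hw
      have m1 : x1v ∈ Hsub := Submodule.subset_span (by simp)
      have m2 : hv - bv ∈ Hsub := Submodule.subset_span (by simp)
      have m3 : fv - zv ∈ Hsub := Submodule.subset_span (by simp)
      have s2 : sigma (hv - bv) = hv - bv := by rw [map_sub, hh, hb]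
      have s3 : sigma (fv - zv) = fv - zv := by rw [map_sub, hf, hz]
      rcases hw with rfl | rfl | rfl
      · exact ⟨by rw [h1]; exact Hsub.neg_mem m1, -x1v, Hsub.neg_mem m1, by rw [map_neg, h1, neg_neg]⟩
      · exact ⟨by rw [s2]; exact m2, hv - bv, m2, s2⟩
      · exact ⟨by rw [s3]; exact m3, fv - zv, m3, s3⟩
    apply le_antisymm
    · rw [Hsub, Submodule.map_span, Submodule.span_le]
      rintro _ ⟨w, hw, rfl⟩
      exact (key w hw).1
    · rw [Hsub, Submodule.span_le] at *
      intro w hw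
      obtain ⟨-, w', hw', hww⟩ := key w hw
      exact ⟨w', hw', hww⟩
  · intro sbar hsbar J hJ
    obtain ⟨J1, J2, J3, J4, J5, J6⟩ := hJ
    have sz : sbar (pr zv) = pr zv := by rw [hsbar, hz]
    have sb : sbar (pr bv) = pr bv := by rw [hsbar, hb]
    have se : sbar (pr ev) = pr ev := by rw [hsbar, he]
    have s2 : sbar (pr x2v) = -pr x2v := by rw [hsbar, h2, map_neg]
    have s3 : sbar (pr x3v) = -pr x3v := by rw [hsbar, h3, map_neg]
    have s4 : sbar (pr x4v) = -pr x4v := by rw [hsbar, h4, map_neg]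
    refine Submodule.linearMap_qext _ ?_
    ext u
    show sbar (J (pr u)) = -(J (sbar (pr u)))
    rw [G.decomp u]
    simp only [map_add, map_smul, map_neg, map_zero, pr_x1, pr_h, pr_f,
      J1, J2, J3, J4, J5, J6, sz, sb, se, s2, s3, s4, smul_neg, smul_zero, neg_neg]
    abel
end
end

section
/- The symmetric bilinear form B on 𝔪 = 𝔤/𝔥 defined on the basis z̄, b̄, ē, x̄₂, x̄₃, x̄₄ by B(z̄, ē) = B(ē, z̄) = 1/2, B(x̄₂, x̄₄) = B(x̄₄, x̄₂) = 1/2, B(b̄, b̄) = −1, B(x̄₃, x̄₃) = −1, and B = 0 on all other pairs of basis vectors, is non-degenerate of signature (2,4), is J-Hermitian, i.e. B(Ju, Jv) = B(u, v) for all u, v ∈ 𝔪, and is invariant under the isotropy representation: B(ρ(X)u, v) + B(u, ρ(X)v) = 0 for all X ∈ 𝔥 and u, v ∈ 𝔪. -/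
noncomputable section

/-- The ordered basis `z̄, b̄, ē, x̄₂, x̄₃, x̄₄` of `𝔪 = 𝔤/𝔥`. -/
def mbas : Fin 6 → G ⧸ Hsub := ![pr zv, pr bv, pr ev, pr x2v, pr x3v, pr x4v]

/-- The Gram matrix of the invariant pseudo-Hermitian metric `B` in the basis
`z̄, b̄, ē, x̄₂, x̄₃, x̄₄`: `B(z̄,ē) = 1/2`, `B(x̄₂,x̄₄) = 1/2`, `B(b̄,b̄) = −1`,
`B(x̄₃,x̄₃) = −1`, and `B = 0` on all other pairs of basis vectors. -/
def Bmat : Matrix (Fin 6) (Fin 6) ℝ :=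
  !![0,    0, 1/2,   0,  0,   0;
     0,   -1,   0,   0,  0,   0;
     1/2,  0,   0,   0,  0,   0;
     0,    0,   0,   0,  0, 1/2;
     0,    0,   0,   0, -1,   0;
     0,    0,   0, 1/2,  0,   0]

@[simp] lemma Bmat_00 : Bmat 0 0 = 0 := rfl
@[simp] lemma Bmat_01 : Bmat 0 1 = 0 := rfl
@[simp] lemma Bmat_02 : Bmat 0 2 = 1/2 := rfl
@[simp] lemma Bmat_03 : Bmat 0 3 = 0 := rfl
@[simp] lemma Bmat_04 : Bmat 0 4 = 0 := rfl
@[simp] lemma Bmat_05 : Bmat 0 5 = 0 := rfl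
@[simp] lemma Bmat_10 : Bmat 1 0 = 0 := rfl
@[simp] lemma Bmat_11 : Bmat 1 1 = -1 := rfl
@[simp] lemma Bmat_12 : Bmat 1 2 = 0 := rfl
@[simp] lemma Bmat_13 : Bmat 1 3 = 0 := rfl
@[simp] lemma Bmat_14 : Bmat 1 4 = 0 := rfl
@[simp] lemma Bmat_15 : Bmat 1 5 = 0 := rfl
@[simp] lemma Bmat_20 : Bmat 2 0 = 1/2 := rfl
@[simp] lemma Bmat_21 : Bmat 2 1 = 0 := rfl
@[simp] lemma Bmat_22 : Bmat 2 2 = 0 := rfl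
@[simp] lemma Bmat_23 : Bmat 2 3 = 0 := rfl
@[simp] lemma Bmat_24 : Bmat 2 4 = 0 := rfl
@[simp] lemma Bmat_25 : Bmat 2 5 = 0 := rfl
@[simp] lemma Bmat_30 : Bmat 3 0 = 0 := rfl
@[simp] lemma Bmat_31 : Bmat 3 1 = 0 := rfl
@[simp] lemma Bmat_32 : Bmat 3 2 = 0 := rfl
@[simp] lemma Bmat_33 : Bmat 3 3 = 0 := rfl
@[simp] lemma Bmat_34 : Bmat 3 4 = 0 := rfl
@[simp] lemma Bmat_35 : Bmat 3 5 = 1/2 := rfl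
@[simp] lemma Bmat_40 : Bmat 4 0 = 0 := rfl
@[simp] lemma Bmat_41 : Bmat 4 1 = 0 := rfl
@[simp] lemma Bmat_42 : Bmat 4 2 = 0 := rfl
@[simp] lemma Bmat_43 : Bmat 4 3 = 0 := rfl
@[simp] lemma Bmat_44 : Bmat 4 4 = -1 := rfl
@[simp] lemma Bmat_45 : Bmat 4 5 = 0 := rfl
@[simp] lemma Bmat_50 : Bmat 5 0 = 0 := rfl
@[simp] lemma Bmat_51 : Bmat 5 1 = 0 := rfl
@[simp] lemma Bmat_52 : Bmat 5 2 = 0 := rfl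
@[simp] lemma Bmat_53 : Bmat 5 3 = 1/2 := rfl
@[simp] lemma Bmat_54 : Bmat 5 4 = 0 := rfl
@[simp] lemma Bmat_55 : Bmat 5 5 = 0 := rfl

/-- The defining values of the bilinear form `B` on `𝔪`. -/
def IsB (B : LinearMap.BilinForm ℝ (G ⧸ Hsub)) : Prop :=
  ∀ i j : Fin 6, B (mbas i) (mbas j) = Bmat i j


@[simp] lemma mbas0 : mbas 0 = pr zv := rfl
@[simp] lemma mbas1 : mbas 1 = pr bv := rfl
@[simp] lemma mbas2 : mbas 2 = pr ev := rfl
@[simp] lemma mbas3 : mbas 3 = pr x2v := rfl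
@[simp] lemma mbas4 : mbas 4 = pr x3v := rfl
@[simp] lemma mbas5 : mbas 5 = pr x4v := rfl

lemma x1v_mem : x1v ∈ Hsub := Submodule.subset_span (by simp)
lemma hb_mem : hv - bv ∈ Hsub := Submodule.subset_span (by simp)
lemma fz_mem : fv - zv ∈ Hsub := Submodule.subset_span (by simp)

lemma pr_zero_iff (w : G) : pr w = 0 ↔ w ∈ Hsub := Submodule.Quotient.mk_eq_zero _

lemma pr_eq (w : G) :
    pr w = (w 0 + w 8) • mbas 0 + (w 1 + w 6) • mbas 1 + w 7 • mbas 2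
      + w 3 • mbas 3 + w 4 • mbas 4 + w 5 • mbas 5 := by
  have hx : w = ((w 0 + w 8) • zv + (w 1 + w 6) • bv + w 7 • ev + w 3 • x2v
      + w 4 • x3v + w 5 • x4v) + (w 2 • x1v + w 6 • (hv - bv) + w 8 • (fv - zv)) := by
    funext k; fin_cases k <;>
      simp only [G.lie_def, gb, G.add_apply, G.smul_apply, G.sub_apply, G.neg_apply] <;>
      simp [zv, bv, ev, x1v, x2v, x3v, x4v, hv, fv, Pi.single_apply] <;> ring
  have hmem : (w 2 • x1v + w 6 • (hv - bv) + w 8 • (fv - zv)) ∈ Hsub :=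
    add_mem (add_mem (Hsub.smul_mem _ x1v_mem) (Hsub.smul_mem _ hb_mem)) (Hsub.smul_mem _ fz_mem)
  conv_lhs => rw [hx]
  rw [map_add, (pr_zero_iff _).mpr hmem, add_zero]
  simp only [map_add, map_smul, mbas0, mbas1, mbas2, mbas3, mbas4, mbas5]

lemma br_x1 (u : G) : ⁅x1v, u⁆ = u 5 • zv + (3*u 6 - u 1) • x1v + (-(u 7)) • x2v := by
  funext k; fin_cases k <;>
    simp only [G.lie_def, gb, G.add_apply, G.smul_apply, G.sub_apply, G.neg_apply] <;>
      simp [G.lie_def, gb, zv, x1v, x2v, Pi.single_apply] <;> ring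

lemma br_hb (u : G) : ⁅hv - bv, u⁆ = (-2*u 0) • zv + (-4*u 2) • x1v + (-2*u 3) • x2v
    + (2*u 5) • x4v + (2*u 7) • ev + (-2*u 8) • fv := by
  funext k; fin_cases k <;>
    simp only [G.lie_def, gb, G.add_apply, G.smul_apply, G.sub_apply, G.neg_apply] <;>
      simp [G.lie_def, gb, zv, x1v, x2v, x4v, ev, fv, hv, bv, Pi.single_apply] <;> ring

lemma br_fz (u : G) : ⁅fv - zv, u⁆ = (2*u 1) • zv + (-3*u 3) • x1v + (-2*u 4) • x2v
    + (-(u 5)) • x3v + u 7 • hv + (2*u 6) • fv := by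
  funext k; fin_cases k <;>
    simp only [G.lie_def, gb, G.add_apply, G.smul_apply, G.sub_apply, G.neg_apply] <;>
      simp [G.lie_def, gb, zv, x1v, x2v, x3v, hv, fv, Pi.single_apply] <;> ring

lemma prbr_x1 (u : G) : pr ⁅x1v, u⁆ = u 5 • mbas 0 + (-(u 7)) • mbas 3 := by
  rw [br_x1]
  simp only [map_add, map_smul, pr_x1, smul_zero, mbas0, mbas3, add_zero]

lemma prbr_hb (u : G) : pr ⁅hv - bv, u⁆ = (-2*u 0 + -2*u 8) • mbas 0 + (2*u 7) • mbas 2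
    + (-2*u 3) • mbas 3 + (2*u 5) • mbas 5 := by
  rw [br_hb]
  simp only [map_add, map_smul, pr_x1, pr_f, smul_zero, mbas0, mbas2, mbas3, mbas5, add_zero]
  module

lemma prbr_fz (u : G) : pr ⁅fv - zv, u⁆ = (2*u 1 + 2*u 6) • mbas 0 + u 7 • mbas 1
    + (-2*u 4) • mbas 3 + (-(u 5)) • mbas 4 := by
  rw [br_fz]
  simp only [map_add, map_smul, pr_x1, pr_f, pr_h, smul_zero, mbas0, mbas1, mbas3, mbas4, add_zero]
  module


@[simp] lemma vec6_four {α : Type*} (a b c d e f : α) : ![a,b,c,d,e,f] 4 = e := rfl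
@[simp] lemma vec6_five {α : Type*} (a b c d e f : α) : ![a,b,c,d,e,f] 5 = f := rfl

set_option maxHeartbeats 2000000 in
/-- The symmetric bilinear form `B` on `𝔪 = 𝔤/𝔥` defined on the basis
`z̄, b̄, ē, x̄₂, x̄₃, x̄₄` by `B(z̄,ē) = 1/2`, `B(x̄₂,x̄₄) = 1/2`, `B(b̄,b̄) = −1`,
`B(x̄₃,x̄₃) = −1` (and `B = 0` on all other pairs of basis vectors) is non-degenerate of
signature `(2,4)`, is `J`-Hermitian (`B(Ju,Jv) = B(u,v)`), and is invariant under the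
isotropy representation (`B(ρ(X)u, v) + B(u, ρ(X)v) = 0`). -/
theorem stmt10 (B : LinearMap.BilinForm ℝ (G ⧸ Hsub))
    (hBsymm : ∀ u v : G ⧸ Hsub, B u v = B v u) (hB : IsB B)
    (J : Module.End ℝ (G ⧸ Hsub)) (hJ : IsJ J) :
    -- `B` is non-degenerate
    (∀ u : G ⧸ Hsub, (∀ v : G ⧸ Hsub, B u v = 0) → u = 0) ∧
    -- of signature `(2,4)`
    (∃ g : Module.Basis (Fin 6) ℝ (G ⧸ Hsub), ∀ i j : Fin 6,
      B (g i) (g j) = if i = j then (if (i : ℕ) < 2 then 1 else -1) else 0) ∧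
    -- `J`-Hermitian
    (∀ u v : G ⧸ Hsub, B (J u) (J v) = B u v) ∧
    -- and invariant under the isotropy representation
    (∀ X ∈ Hsub, ∀ u v : G, B (pr ⁅X, u⁆) (pr v) + B (pr u) (pr ⁅X, v⁆) = 0) := by
  
  -- B-values on the basis, numerically
  have hB' : ∀ i j : Fin 6, B (mbas i) (mbas j) = Bmat i j := hB
  have b00 : B (pr zv) (pr zv) = Bmat 0 0 := hB 0 0
  have b01 : B (pr zv) (pr bv) = Bmat 0 1 := hB 0 1
  have b02 : B (pr zv) (pr ev) = Bmat 0 2 := hB 0 2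
  have b03 : B (pr zv) (pr x2v) = Bmat 0 3 := hB 0 3
  have b04 : B (pr zv) (pr x3v) = Bmat 0 4 := hB 0 4
  have b05 : B (pr zv) (pr x4v) = Bmat 0 5 := hB 0 5
  have b10 : B (pr bv) (pr zv) = Bmat 1 0 := hB 1 0
  have b11 : B (pr bv) (pr bv) = Bmat 1 1 := hB 1 1
  have b12 : B (pr bv) (pr ev) = Bmat 1 2 := hB 1 2
  have b13 : B (pr bv) (pr x2v) = Bmat 1 3 := hB 1 3
  have b14 : B (pr bv) (pr x3v) = Bmat 1 4 := hB 1 4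
  have b15 : B (pr bv) (pr x4v) = Bmat 1 5 := hB 1 5
  have b20 : B (pr ev) (pr zv) = Bmat 2 0 := hB 2 0
  have b21 : B (pr ev) (pr bv) = Bmat 2 1 := hB 2 1
  have b22 : B (pr ev) (pr ev) = Bmat 2 2 := hB 2 2
  have b23 : B (pr ev) (pr x2v) = Bmat 2 3 := hB 2 3
  have b24 : B (pr ev) (pr x3v) = Bmat 2 4 := hB 2 4
  have b25 : B (pr ev) (pr x4v) = Bmat 2 5 := hB 2 5
  have b30 : B (pr x2v) (pr zv) = Bmat 3 0 := hB 3 0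
  have b31 : B (pr x2v) (pr bv) = Bmat 3 1 := hB 3 1
  have b32 : B (pr x2v) (pr ev) = Bmat 3 2 := hB 3 2
  have b33 : B (pr x2v) (pr x2v) = Bmat 3 3 := hB 3 3
  have b34 : B (pr x2v) (pr x3v) = Bmat 3 4 := hB 3 4
  have b35 : B (pr x2v) (pr x4v) = Bmat 3 5 := hB 3 5
  have b40 : B (pr x3v) (pr zv) = Bmat 4 0 := hB 4 0
  have b41 : B (pr x3v) (pr bv) = Bmat 4 1 := hB 4 1
  have b42 : B (pr x3v) (pr ev) = Bmat 4 2 := hB 4 2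
  have b43 : B (pr x3v) (pr x2v) = Bmat 4 3 := hB 4 3
  have b44 : B (pr x3v) (pr x3v) = Bmat 4 4 := hB 4 4
  have b45 : B (pr x3v) (pr x4v) = Bmat 4 5 := hB 4 5
  have b50 : B (pr x4v) (pr zv) = Bmat 5 0 := hB 5 0
  have b51 : B (pr x4v) (pr bv) = Bmat 5 1 := hB 5 1
  have b52 : B (pr x4v) (pr ev) = Bmat 5 2 := hB 5 2
  have b53 : B (pr x4v) (pr x2v) = Bmat 5 3 := hB 5 3
  have b54 : B (pr x4v) (pr x3v) = Bmat 5 4 := hB 5 4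
  have b55 : B (pr x4v) (pr x4v) = Bmat 5 5 := hB 5 5
  -- linear independence of mbas
  have hli : LinearIndependent ℝ mbas := by
    rw [Fintype.linearIndependent_iff]
    intro c hc
    have key : ∀ j : Fin 6, ∑ i : Fin 6, c i * Bmat i j = 0 := by
      intro j
      have h2 := congrArg (fun x => B x (mbas j)) hc
      simpa [map_sum, LinearMap.sum_apply, LinearMap.smul_apply, smul_eq_mul, hB'] using h2
    intro i
    fin_cases i
    · have := key 2; simpa [Fin.sum_univ_six] using this
    · have := key 1; simpa [Fin.sum_univ_six] using this
    · have := key 0; simpa [Fin.sum_univ_six] using this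
    · have := key 5; simpa [Fin.sum_univ_six] using this
    · have := key 4; simpa [Fin.sum_univ_six] using this
    · have := key 3; simpa [Fin.sum_univ_six] using this
  have hspan : ⊤ ≤ Submodule.span ℝ (Set.range mbas) := by
    rintro q -
    obtain ⟨w, rfl⟩ := Submodule.mkQ_surjective Hsub q
    rw [show Hsub.mkQ w = pr w from rfl, pr_eq]
    refine add_mem (add_mem (add_mem (add_mem (add_mem ?_ ?_) ?_) ?_) ?_) ?_ <;>
      exact Submodule.smul_mem _ _ (Submodule.subset_span ⟨_, rfl⟩)
  let m : Module.Basis (Fin 6) ℝ (G ⧸ Hsub) := Module.Basis.mk hli hspan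
  have hm : ∀ i, m i = mbas i := fun i => Module.Basis.mk_apply hli hspan i
  -- the orthonormal-type basis
  set w : Fin 6 → G ⧸ Hsub :=
    ![mbas 0 + mbas 2, mbas 3 + mbas 5, mbas 0 - mbas 2, mbas 3 - mbas 5, mbas 1, mbas 4] with hwdef
  have hw : ∀ i j : Fin 6, B (w i) (w j)
      = if i = j then (if (i : ℕ) < 2 then 1 else -1) else 0 := by
    intro i j
    fin_cases i <;> fin_cases j <;>
      simp [hwdef, map_add, map_sub, LinearMap.add_apply, LinearMap.sub_apply, b00, b01, b02, b03, b04, b05, b10, b11, b12, b13, b14, b15, b20, b21, b22, b23, b24, b25, b30, b31, b32, b33, b34, b35, b40, b41, b42, b43, b44, b45, b50, b51, b52, b53, b54, b55] <;>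
      norm_num
  have hwli : LinearIndependent ℝ w := by
    rw [Fintype.linearIndependent_iff]
    intro c hc
    intro j
    have h2 := congrArg (fun x => B x (w j)) hc
    simp only [map_sum, LinearMap.sum_apply, map_smul, LinearMap.smul_apply, smul_eq_mul,
      hw, map_zero, LinearMap.zero_apply] at h2
    fin_cases j <;> norm_num [Fin.sum_univ_six] at h2 <;> exact h2
  have hwspan : ⊤ ≤ Submodule.span ℝ (Set.range w) := by
    refine le_trans hspan (Submodule.span_le.mpr ?_)
    rintro _ ⟨i, rfl⟩
    have mem : ∀ k : Fin 6, w k ∈ Submodule.span ℝ (Set.range w) :=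
      fun k => Submodule.subset_span ⟨k, rfl⟩
    fin_cases i
    · show mbas 0 ∈ Submodule.span ℝ (Set.range w)
      have : mbas 0 = (1/2 : ℝ) • w 0 + (1/2 : ℝ) • w 2 := by rw [hwdef]; simp; module
      rw [this]; exact add_mem (Submodule.smul_mem _ _ (mem 0)) (Submodule.smul_mem _ _ (mem 2))
    · show mbas 1 ∈ Submodule.span ℝ (Set.range w)
      have : mbas 1 = w 4 := by rw [hwdef]; simp
      rw [this]; exact mem 4
    · show mbas 2 ∈ Submodule.span ℝ (Set.range w)
      have : mbas 2 = (1/2 : ℝ) • w 0 + (-(1/2) : ℝ) • w 2 := by rw [hwdef]; simp; module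
      rw [this]; exact add_mem (Submodule.smul_mem _ _ (mem 0)) (Submodule.smul_mem _ _ (mem 2))
    · show mbas 3 ∈ Submodule.span ℝ (Set.range w)
      have : mbas 3 = (1/2 : ℝ) • w 1 + (1/2 : ℝ) • w 3 := by rw [hwdef]; simp; module
      rw [this]; exact add_mem (Submodule.smul_mem _ _ (mem 1)) (Submodule.smul_mem _ _ (mem 3))
    · show mbas 4 ∈ Submodule.span ℝ (Set.range w)
      have : mbas 4 = w 5 := by rw [hwdef]; simp
      rw [this]; exact mem 5
    · show mbas 5 ∈ Submodule.span ℝ (Set.range w)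
      have : mbas 5 = (1/2 : ℝ) • w 1 + (-(1/2) : ℝ) • w 3 := by rw [hwdef]; simp; module
      rw [this]; exact add_mem (Submodule.smul_mem _ _ (mem 1)) (Submodule.smul_mem _ _ (mem 3))
  let wb : Module.Basis (Fin 6) ℝ (G ⧸ Hsub) := Module.Basis.mk hwli hwspan
  have hwb : ∀ i, wb i = w i := fun i => Module.Basis.mk_apply hwli hwspan i
  refine ⟨?_, ⟨wb, fun i j => by rw [hwb, hwb]; exact hw i j⟩, ?_, ?_⟩
  · -- non-degeneracy
    intro u hu
    have hrep : ∀ j : Fin 6, wb.repr u j = 0 := by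
      intro j
      have h0 := hu (wb j)
      conv_lhs at h0 => rw [← wb.sum_repr u]
      simp only [map_sum, LinearMap.sum_apply, map_smul, LinearMap.smul_apply, smul_eq_mul,
        hwb, hw] at h0
      fin_cases j <;> norm_num [Fin.sum_univ_six] at h0 <;> exact h0
    have : wb.repr u = 0 := by ext j; simp [hrep j]
    simpa using (LinearEquiv.map_eq_zero_iff wb.repr).mp this
  · -- J-Hermitian
    obtain ⟨hJ1, hJ2, hJ3, hJ4, hJ5, hJ6⟩ := hJ
    intro u v
    obtain ⟨a, rfl⟩ := Submodule.mkQ_surjective Hsub u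
    obtain ⟨c, rfl⟩ := Submodule.mkQ_surjective Hsub v
    rw [show Hsub.mkQ a = pr a from rfl, show Hsub.mkQ c = pr c from rfl, pr_eq a, pr_eq c]
    simp only [map_add, map_smul, mbas0, mbas1, mbas2, mbas3, mbas4, mbas5,
      hJ1, hJ2, hJ3, hJ4, hJ5, hJ6, map_neg, smul_neg, LinearMap.add_apply,
      LinearMap.smul_apply, LinearMap.neg_apply, smul_eq_mul,
      b00, b01, b02, b03, b04, b05, b10, b11, b12, b13, b14, b15, b20, b21, b22, b23, b24, b25, b30, b31, b32, b33, b34, b35, b40, b41, b42, b43, b44, b45, b50, b51, b52, b53, b54, b55]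
    norm_num
    ring
  · -- invariance
    intro X hX
    induction hX using Submodule.span_induction with
    | mem x hx =>
      simp only [Set.mem_insert_iff, Set.mem_singleton_iff] at hx
      rcases hx with rfl | rfl | rfl
      · intro u v
        rw [prbr_x1, prbr_x1, pr_eq u, pr_eq v]
        simp only [map_add, map_smul, LinearMap.add_apply, LinearMap.smul_apply,
          smul_eq_mul, hB']
        norm_num
      · intro u v
        rw [prbr_hb, prbr_hb, pr_eq u, pr_eq v]
        simp only [map_add, map_smul, LinearMap.add_apply, LinearMap.smul_apply,
          smul_eq_mul, hB']
        norm_num; ring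
      · intro u v
        rw [prbr_fz, prbr_fz, pr_eq u, pr_eq v]
        simp only [map_add, map_smul, LinearMap.add_apply, LinearMap.smul_apply,
          smul_eq_mul, hB']
        norm_num; ring
    | zero => intro u v; simp
    | add x y hx hy ihx ihy =>
      intro u v
      have h1 := ihx u v
      have h2 := ihy u v
      simp only [add_lie, map_add, LinearMap.add_apply] at *
      linarith
    | smul a x hx ihx =>
      intro u v
      have h1 := ihx u v
      simp only [smul_lie, map_smul, LinearMap.smul_apply, smul_eq_mul] at *
      linear_combination a * h1
end
end
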